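/- In the evolution algebra A over ℤ/4ℤ with basis (x_i)_{i≥1} and relations x_i·x_i = 2x_i + x_{i+1}, x_i·x_j = 0 for i ≠ j, the plenary powers of x_1 satisfy x_1^{[n]} = 2x_n + x_{n+1} for all n ≥ 1; in particular x_1^{[n]} ≠ 0 for every n, and the subalgebra of A generated by x_1 equals A. -/

import Mathlib

/-!
The evolution algebra `A` over `R = ℤ/4ℤ` with basis `(x_i)_{i ≥ 1}` indexed by
`ℕ+` (underlying module `ℕ+ →₀ ZMod 4`, `x_i = Finsupp.single i 1`) and
relations `x_i · x_i = 2x_i + x_{i+1}`, `x_i · x_j = 0` for `i ≠ j`;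
concretely `(a · b) = ∑_i a(i) * b(i) • (2 • x_i + x_{i+1})`.
-/
noncomputable def evolMul {R : Type*} [CommRing R] {ι : Type*}
    (Csq : ι → ι →₀ R) (a b : ι →₀ R) : ι →₀ R :=
  a.sum fun i ai => (ai * b i) • Csq i

/-- The squares of the basis elements: `x_i · x_i = 2 • x_i + x_{i+1}`. -/
noncomputable def sqZ4 : ℕ+ → (ℕ+ →₀ ZMod 4) := fun i =>
  (2 : ZMod 4) • Finsupp.single i 1 + Finsupp.single (i + 1) 1

/-- Plenary powers: `plenary mul a n = a^{[n]}` for `n ≥ 1`, defined by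
`a^{[1]} = a · a` and `a^{[n+1]} = a^{[n]} · a^{[n]}`. -/
def plenary {A : Type*} (mul : A → A → A) (a : A) : ℕ → A
  | 0 => a
  | n + 1 => mul (plenary mul a n) (plenary mul a n)

lemma evolMul_single {R : Type*} [CommRing R] {ι : Type*}
    (Csq : ι → ι →₀ R) (i : ι) (r : R) (b : ι →₀ R) :
    evolMul Csq (Finsupp.single i r) b = (r * b i) • Csq i := by
  unfold evolMul
  exact Finsupp.sum_single_index (by simp)

lemma evolMul_add_left {R : Type*} [CommRing R] {ι : Type*}
    (Csq : ι → ι →₀ R) (a a' b : ι →₀ R) :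
    evolMul Csq (a + a') b = evolMul Csq a b + evolMul Csq a' b := by
  unfold evolMul
  exact Finsupp.sum_add_index' (by simp) (fun i r1 r2 => by rw [add_mul, add_smul])

lemma sq_step (n : ℕ+) :
    evolMul sqZ4 ((2 : ZMod 4) • Finsupp.single n 1 + Finsupp.single (n + 1) 1)
      ((2 : ZMod 4) • Finsupp.single n 1 + Finsupp.single (n + 1) 1)
    = (2 : ZMod 4) • Finsupp.single (n + 1) 1 + Finsupp.single (n + 1 + 1) 1 := by
  have hne : n ≠ n + 1 := by
    intro h
    have := congrArg PNat.val h
    simp at this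
  rw [Finsupp.smul_single' (2 : ZMod 4) n 1, mul_one, evolMul_add_left,
    evolMul_single, evolMul_single]
  simp only [Finsupp.add_apply, Finsupp.single_eq_same,
    Finsupp.single_eq_of_ne hne, Finsupp.single_eq_of_ne (Ne.symm hne)]
  rw [show ((2 : ZMod 4) * (2 + 0)) = 0 by decide]
  simp [sqZ4]

lemma plenary_formula (n : ℕ+) :
    plenary (evolMul sqZ4) (Finsupp.single 1 1) (n : ℕ)
      = (2 : ZMod 4) • Finsupp.single n 1 + Finsupp.single (n + 1) 1 := by
  induction n using PNat.recOn with
  | one =>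
    show evolMul sqZ4 (Finsupp.single 1 1) (Finsupp.single 1 1) = _
    rw [evolMul_single]
    simp [sqZ4]
  | succ n ih =>
    have hc : ((n + 1 : ℕ+) : ℕ) = (n : ℕ) + 1 := rfl
    rw [hc]
    show evolMul sqZ4 _ _ = _
    rw [ih, sq_step]

lemma single_mem_of_closed (p : Submodule (ZMod 4) (ℕ+ →₀ ZMod 4))
    (h1 : Finsupp.single 1 1 ∈ p)
    (hmul : ∀ a b : ℕ+ →₀ ZMod 4, a ∈ p → b ∈ p → evolMul sqZ4 a b ∈ p) :
    ∀ n : ℕ+, Finsupp.single n (1 : ZMod 4) ∈ p := by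
  intro n
  induction n using PNat.recOn with
  | one => exact h1
  | succ n ih =>
    have hsq : sqZ4 n ∈ p := by
      have := hmul _ _ ih ih
      rwa [evolMul_single, Finsupp.single_eq_same, one_mul, one_smul] at this
    have heq : Finsupp.single (n+1) (1 : ZMod 4)
        = sqZ4 n - (2 : ZMod 4) • Finsupp.single n 1 := by
      simp [sqZ4]
    rw [heq]
    exact p.sub_mem hsq (p.smul_mem _ ih)

/-- In the evolution algebra over `ℤ/4ℤ` with
`x_i·x_i = 2x_i + x_{i+1}`, the plenary powers of `x_1` satisfy
`x_1^{[n]} = 2x_n + x_{n+1}` for all `n ≥ 1`; in particular `x_1^{[n]} ≠ 0`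
for every `n`, and the subalgebra generated by `x_1` (the smallest
mul-closed `R`-submodule containing `x_1`) equals all of `A`. -/
theorem example_Z4_generated_by_x1 :
    (∀ n : ℕ+, plenary (evolMul sqZ4) (Finsupp.single 1 1) (n : ℕ)
        = (2 : ZMod 4) • Finsupp.single n 1 + Finsupp.single (n + 1) 1) ∧
    (∀ n : ℕ+, plenary (evolMul sqZ4) (Finsupp.single 1 1) (n : ℕ) ≠ 0) ∧
    (∀ p : Submodule (ZMod 4) (ℕ+ →₀ ZMod 4),
        Finsupp.single 1 1 ∈ p →
        (∀ a b : ℕ+ →₀ ZMod 4, a ∈ p → b ∈ p → evolMul sqZ4 a b ∈ p) →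
        ∀ z : ℕ+ →₀ ZMod 4, z ∈ p) := by
  refine ⟨plenary_formula, ?_, ?_⟩
  · intro n h
    rw [plenary_formula] at h
    have hval := congrFun (congrArg (fun f : ℕ+ →₀ ZMod 4 => (f : ℕ+ → ZMod 4)) h) (n + 1)
    have hne : n ≠ n + 1 := by
      intro h
      have := congrArg PNat.val h
      simp at this
    simp [Finsupp.single_apply, hne] at hval
    exact absurd hval (by decide)
  · intro p h1 hmul z
    induction z using Finsupp.induction with
    | zero => exact p.zero_mem
    | single_add a r f _ _ ihf =>
      refine p.add_mem ?_ ihf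
      have heq : Finsupp.single a r = r • Finsupp.single a (1 : ZMod 4) := by
        simp [Finsupp.smul_single']
      rw [heq]
      exact p.smul_mem _ (single_mem_of_closed p h1 hmul a)
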